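/- The function K(r) = π r + (2/r)√(r²−1) − 2r·arctan(√(r²−1)) is strictly increasing on the interval (1, ∞), its limit as r → 1⁺ is π, its limit as r → ∞ is 4, and K maps the open interval (1, ∞) bijectively onto the open interval (π, 4); i.e., K : (1,∞) → (π,4) is a diffeomorphism. -/

import Mathlib

open Real Filter Set

/-- The function `K(r) = π r + (2/r)√(r²−1) − 2r·arctan(√(r²−1))`. -/
noncomputable def K (r : ℝ) : ℝ :=
  π * r + (2 / r) * Real.sqrt (r ^ 2 - 1) - 2 * r * Real.arctan (Real.sqrt (r ^ 2 - 1))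

lemma hasDerivK {r : ℝ} (hr : 1 < r) :
    HasDerivAt K (π - 2 * Real.arctan (Real.sqrt (r ^ 2 - 1))
      - 2 * Real.sqrt (r ^ 2 - 1) / r ^ 2) r := by
  have hr0 : (0:ℝ) < r := lt_trans one_pos hr
  have hpos : (0:ℝ) < r ^ 2 - 1 := by nlinarith
  set s := Real.sqrt (r ^ 2 - 1) with hs_def
  have hs0 : 0 < s := Real.sqrt_pos.mpr hpos
  have hs2 : s ^ 2 = r ^ 2 - 1 := Real.sq_sqrt hpos.le
  have h1 : HasDerivAt (fun x : ℝ => x ^ 2 - 1) (2 * r) r := by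
    simpa using (hasDerivAt_pow 2 r).sub_const 1
  have hds : HasDerivAt (fun x : ℝ => Real.sqrt (x ^ 2 - 1)) (r / s) r := by
    have h2 := (Real.hasDerivAt_sqrt (ne_of_gt hpos)).comp r h1
    refine h2.congr_deriv ?_
    field_simp
    exact hs_def
  have hda : HasDerivAt (fun x : ℝ => Real.arctan (Real.sqrt (x ^ 2 - 1)))
      (1 / (1 + s ^ 2) * (r / s)) r := by
    have := (Real.hasDerivAt_arctan s).comp r hds
    exact this
  have hinv : HasDerivAt (fun x : ℝ => 2 / x) (2 * (-(r ^ 2)⁻¹)) r := by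
    simpa [div_eq_mul_inv] using (hasDerivAt_inv (ne_of_gt hr0)).const_mul 2
  have hA : HasDerivAt (fun x : ℝ => π * x) π r := by
    simpa using (hasDerivAt_id r).const_mul π
  have hB := hinv.mul hds
  have hC := ((hasDerivAt_id r).const_mul 2).mul hda
  have hK := (hA.add hB).sub hC
  have : HasDerivAt K
      (π + (2 * (-(r ^ 2)⁻¹) * s + 2 / r * (r / s))
        - (2 * 1 * Real.arctan s + 2 * r * (1 / (1 + s ^ 2) * (r / s)))) r := by
    exact hK
  refine this.congr_deriv ?_
  have h12 : 1 + s ^ 2 = r ^ 2 := by linarith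
  rw [h12]
  field_simp
  ring

lemma arctan_aux {t : ℝ} (ht : 0 < t) : t / (1 + t ^ 2) < Real.arctan t := by
  set g : ℝ → ℝ := fun u => Real.arctan u - u / (1 + u ^ 2) with hg
  have hd : ∀ u : ℝ, HasDerivAt g (2 * u ^ 2 / (1 + u ^ 2) ^ 2) u := by
    intro u
    have h1 : (0:ℝ) < 1 + u ^ 2 := by positivity
    have hden : HasDerivAt (fun x : ℝ => 1 + x ^ 2) (2 * u) u := by
      simpa using (hasDerivAt_pow 2 u).const_add 1
    have h2 : HasDerivAt (fun x : ℝ => x / (1 + x ^ 2))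
        ((1 * (1 + u ^ 2) - u * (2 * u)) / (1 + u ^ 2) ^ 2) u :=
      (hasDerivAt_id u).div hden (ne_of_gt h1)
    have h3 := (Real.hasDerivAt_arctan u).sub h2
    refine h3.congr_deriv ?_
    field_simp
    ring
  have hmono : StrictMonoOn g (Set.Ici (0:ℝ)) := by
    apply strictMonoOn_of_deriv_pos (convex_Ici 0)
    · exact fun x _ => ((hd x).differentiableAt).continuousAt.continuousWithinAt
    · intro x hx
      rw [interior_Ici] at hx
      rw [(hd x).deriv]
      have hx0 : 0 < x := hx
      positivity
  have := hmono (Set.self_mem_Ici) (le_of_lt ht : (0:ℝ) ≤ t) ht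
  simpa [hg] using this

lemma derivK_pos {r : ℝ} (hr : 1 < r) :
    0 < π - 2 * Real.arctan (Real.sqrt (r ^ 2 - 1))
      - 2 * Real.sqrt (r ^ 2 - 1) / r ^ 2 := by
  have hr0 : (0:ℝ) < r := lt_trans one_pos hr
  have hpos : (0:ℝ) < r ^ 2 - 1 := by nlinarith
  set s := Real.sqrt (r ^ 2 - 1) with hs_def
  have hs0 : 0 < s := Real.sqrt_pos.mpr hpos
  have hs2 : s ^ 2 = r ^ 2 - 1 := Real.sq_sqrt hpos.le
  have harc : Real.arctan s⁻¹ = π / 2 - Real.arctan s := Real.arctan_inv_of_pos hs0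
  have haux := arctan_aux (inv_pos.mpr hs0)
  have hineq : s⁻¹ / (1 + (s⁻¹) ^ 2) = s / r ^ 2 := by
    have hsne : s ≠ 0 := ne_of_gt hs0
    have h12 : 1 + s ^ 2 = r ^ 2 := by linarith
    rw [← h12]
    field_simp
    ring
  rw [hineq, harc] at haux
  have h2 : 2 * s / r ^ 2 = 2 * (s / r ^ 2) := by ring
  rw [h2]
  linarith

lemma K_mono : StrictMonoOn K (Set.Ioi (1:ℝ)) := by
  apply strictMonoOn_of_deriv_pos (convex_Ioi 1)
  · exact fun x hx => ((hasDerivK hx).differentiableAt).continuousAt.continuousWithinAt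
  · intro x hx
    rw [interior_Ioi] at hx
    rw [(hasDerivK hx).deriv]
    exact derivK_pos hx

lemma tendsto_one : Filter.Tendsto K (nhdsWithin 1 (Set.Ioi (1:ℝ))) (nhds π) := by
  have hc : ContinuousAt K 1 := by
    have csqrt : Continuous fun r : ℝ => Real.sqrt (r ^ 2 - 1) := by
      exact Real.continuous_sqrt.comp (by continuity)
    apply ContinuousAt.sub
    · apply ContinuousAt.add
      · exact (continuous_const.mul continuous_id).continuousAt
      · exact (ContinuousAt.div continuousAt_const continuousAt_id one_ne_zero).mul
          csqrt.continuousAt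
    · exact ((continuous_const.mul continuous_id).continuousAt).mul
        ((Real.continuous_arctan.comp csqrt).continuousAt)
  have hK1 : K 1 = π := by simp [K]
  exact hK1 ▸ (hc.continuousWithinAt : ContinuousWithinAt K (Set.Ioi 1) 1)

set_option maxHeartbeats 1000000 in
lemma tendsto_top : Filter.Tendsto K Filter.atTop (nhds 4) := by
  have hq : Tendsto (fun r : ℝ => Real.sqrt ((r ^ 2 - 1) / r ^ 2)) atTop (nhds 1) := by
    have h2 : Tendsto (fun r : ℝ => 1 - (r ^ 2)⁻¹) atTop (nhds (1:ℝ)) := by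
      have h3 : Tendsto (fun r : ℝ => (r ^ 2)⁻¹) atTop (nhds 0) :=
        (tendsto_pow_atTop (n := 2) (by norm_num)).inv_tendsto_atTop
      simpa using tendsto_const_nhds.sub h3
    have h1 : Tendsto (fun r : ℝ => (r ^ 2 - 1) / r ^ 2) atTop (nhds 1) := by
      refine h2.congr' ?_
      filter_upwards [eventually_gt_atTop (0:ℝ)] with r hr
      field_simp
    have := (Real.continuous_sqrt.continuousAt (x := (1:ℝ))).tendsto.comp h1
    simpa [Function.comp_def] using this
  have hs_top : Tendsto (fun r : ℝ => Real.sqrt (r ^ 2 - 1)) atTop atTop := by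
    apply tendsto_atTop_atTop.mpr
    intro b
    refine ⟨b ^ 2 + 2, fun a ha => ?_⟩
    calc b ≤ Real.sqrt (b ^ 2) := by
            rw [Real.sqrt_sq_eq_abs]; exact le_abs_self b
      _ ≤ Real.sqrt (a ^ 2 - 1) := Real.sqrt_le_sqrt (by nlinarith [sq_nonneg b, sq_nonneg (b ^ 2 + 1)])
  have hinv : Tendsto (fun r : ℝ => (Real.sqrt (r ^ 2 - 1))⁻¹) atTop
      (nhdsWithin 0 {(0:ℝ)}ᶜ) := by
    apply tendsto_nhdsWithin_of_tendsto_nhds_of_eventually_within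
    · exact hs_top.inv_tendsto_atTop
    · filter_upwards [hs_top.eventually_gt_atTop 0] with r hr
      simp [ne_of_gt (inv_pos.mpr hr)]
  have hslope : Tendsto (fun u : ℝ => Real.arctan u / u) (nhdsWithin 0 {(0:ℝ)}ᶜ)
      (nhds 1) := by
    have h := (Real.hasDerivAt_arctan 0)
    rw [hasDerivAt_iff_tendsto_slope] at h
    have h' := h.congr (fun u => show slope Real.arctan 0 u = Real.arctan u / u by
      simp [slope_def_field])
    simpa using h'
  have hA : Tendsto (fun r : ℝ =>
      Real.arctan (Real.sqrt (r ^ 2 - 1))⁻¹ / (Real.sqrt (r ^ 2 - 1))⁻¹) atTop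
      (nhds 1) := hslope.comp hinv
  have hmain : Tendsto (fun r : ℝ => 2 * Real.sqrt ((r ^ 2 - 1) / r ^ 2) +
      2 * (Real.arctan (Real.sqrt (r ^ 2 - 1))⁻¹ / (Real.sqrt (r ^ 2 - 1))⁻¹) *
        (Real.sqrt ((r ^ 2 - 1) / r ^ 2))⁻¹) atTop (nhds 4) := by
    have := (hq.const_mul 2).add ((hA.const_mul 2).mul (hq.inv₀ one_ne_zero))
    norm_num at this
    convert this using 2
    norm_num
  refine hmain.congr' ?_
  filter_upwards [eventually_gt_atTop (1:ℝ)] with r hr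
  have hr0 : (0:ℝ) < r := lt_trans one_pos hr
  have hpos : (0:ℝ) < r ^ 2 - 1 := by nlinarith
  have hs0 : 0 < Real.sqrt (r ^ 2 - 1) := Real.sqrt_pos.mpr hpos
  set s := Real.sqrt (r ^ 2 - 1) with hs_def
  have hs2 : s ^ 2 = r ^ 2 - 1 := Real.sq_sqrt hpos.le
  have hqr : Real.sqrt ((r ^ 2 - 1) / r ^ 2) = s / r := by
    rw [Real.sqrt_div hpos.le, Real.sqrt_sq hr0.le, hs_def]
  have harc : Real.arctan s = π / 2 - Real.arctan s⁻¹ := by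
    have := Real.arctan_inv_of_pos hs0
    linarith
  show 2 * Real.sqrt ((r ^ 2 - 1) / r ^ 2) +
      2 * (Real.arctan s⁻¹ / s⁻¹) * (Real.sqrt ((r ^ 2 - 1) / r ^ 2))⁻¹ = K r
  have hsne : s ≠ 0 := ne_of_gt hs0
  have hrne : r ≠ 0 := ne_of_gt hr0
  rw [hqr, K, ← hs_def, harc]
  field_simp
  ring

lemma K_lt_four {r : ℝ} (hr : 1 < r) : K r < 4 := by
  have h1 : K r < K (r + 1) := K_mono hr (by simp; linarith) (by linarith)
  have h2 : K (r + 1) ≤ 4 := by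
    apply ge_of_tendsto tendsto_top
    filter_upwards [eventually_ge_atTop (r + 1)] with y hy
    rcases eq_or_lt_of_le hy with h | h
    · rw [← h]
    · exact le_of_lt (K_mono (by simp; linarith) (by simp; linarith) h)
  linarith

lemma pi_lt_K {r : ℝ} (hr : 1 < r) : π < K r := by
  set x := (1 + r) / 2 with hx_def
  have hx1 : 1 < x := by rw [hx_def]; linarith
  have hxr : x < r := by rw [hx_def]; linarith
  have h1 : K x < K r := K_mono hx1 hr hxr
  have h2 : π ≤ K x := by
    apply le_of_tendsto tendsto_one
    filter_upwards [Ioc_mem_nhdsGT_of_mem (Set.left_mem_Ico.mpr hx1)] with y hy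
    rcases eq_or_lt_of_le hy.2 with h | h
    · rw [h]
    · exact le_of_lt (K_mono hy.1 hx1 h)
  linarith

theorem K_diffeo :
    StrictMonoOn K (Set.Ioi (1:ℝ)) ∧
    Filter.Tendsto K (nhdsWithin 1 (Set.Ioi (1:ℝ))) (nhds π) ∧
    Filter.Tendsto K Filter.atTop (nhds 4) ∧
    Set.BijOn K (Set.Ioi (1:ℝ)) (Set.Ioo π 4) ∧
    ∀ r ∈ Set.Ioi (1:ℝ), DifferentiableAt ℝ K r := by
  refine ⟨K_mono, tendsto_one, tendsto_top, ⟨?_, ?_, ?_⟩, ?_⟩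
  · intro r hr
    exact ⟨pi_lt_K hr, K_lt_four hr⟩
  · exact K_mono.injOn
  · intro y hy
    obtain ⟨a, haK, ha1⟩ : ∃ a, K a < y ∧ 1 < a := by
      have h1 : ∀ᶠ x in nhdsWithin 1 (Set.Ioi (1:ℝ)), K x < y :=
        tendsto_one.eventually_lt_const hy.1
      have h2 : ∀ᶠ x in nhdsWithin 1 (Set.Ioi (1:ℝ)), x ∈ Set.Ioi (1:ℝ) :=
        self_mem_nhdsWithin
      exact (h1.and h2).exists
    obtain ⟨b, hbK, hab⟩ : ∃ b, y < K b ∧ a ≤ b := by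
      have h1 : ∀ᶠ x in atTop, y < K x := tendsto_top.eventually_const_lt hy.2
      exact (h1.and (eventually_ge_atTop a)).exists
    have hb1 : 1 < b := lt_of_lt_of_le ha1 hab
    have hcont : ContinuousOn K (Set.Icc a b) := by
      intro x hx
      exact ((hasDerivK (lt_of_lt_of_le ha1 hx.1)).differentiableAt).continuousAt.continuousWithinAt
    have hy' : y ∈ Set.Icc (K a) (K b) := ⟨le_of_lt haK, le_of_lt hbK⟩
    obtain ⟨c, hc, hKc⟩ := intermediate_value_Icc hab hcont hy'
    exact ⟨c, lt_of_lt_of_le ha1 hc.1, hKc⟩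
  · exact fun r hr => (hasDerivK hr).differentiableAt
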